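/- arXiv:2402.12879 — 6 statements merged into one kernel-verified Lean document; each statement's English description precedes it below -/
import Mathlib

section
/- Let R be a commutative ring of characteristic p whose Frobenius endomorphism x ↦ x^p is surjective (R is semiperfect), and let R → R' be an étale ring homomorphism. Then the Frobenius endomorphism of R' is also surjective. -/
universe u

open Polynomial

/-- Auxiliary fiber lemma: if `S` is formally unramified over `R`, finite over a subring-like
`T` containing all `p`-th powers, then modulo any maximal ideal `m` of `T`, the map
`T/m → S/mS` is surjective. -/
lemma fiber_surj (p : ℕ) [Fact p.Prime] (R T S : Type u) [CommRing R] [CommRing T] [CommRing S]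
    [CharP S p] [Algebra R S] [Algebra.FormallyUnramified R S]
    [Algebra T S] [Algebra R T] [IsScalarTower R T S]
    (hinj : Function.Injective (algebraMap T S))
    (hpow : ∀ x : S, ∃ t : T, algebraMap T S t = x ^ p)
    [Module.Finite T S]
    (m : Ideal T) (hm : m.IsMaximal) (x : S) :
    ∃ t : T, x - algebraMap T S t ∈ m.map (algebraMap T S) := by
  classical
  have hp : p.Prime := Fact.out
  haveI := hm
  set I : Ideal S := m.map (algebraMap T S) with hI
  letI : Field (T ⧸ m) := Ideal.Quotient.field m
  letI : Algebra (T ⧸ m) (S ⧸ I) :=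
    (Ideal.quotientMap I (algebraMap T S) Ideal.le_comap_map).toAlgebra
  have halg : ∀ t : T, algebraMap (T ⧸ m) (S ⧸ I) (Ideal.Quotient.mk m t)
      = Ideal.Quotient.mk I (algebraMap T S t) := fun t => Ideal.quotientMap_mk (H := Ideal.le_comap_map)
  have hsurj : Function.Surjective (algebraMap (T ⧸ m) (S ⧸ I)) := by
    rcases subsingleton_or_nontrivial (S ⧸ I) with hB | hB
    · exact fun b => ⟨0, Subsingleton.elim _ _⟩
    -- instances
    haveI : IsScalarTower T (T ⧸ m) (S ⧸ I) := IsScalarTower.of_algebraMap_eq' (by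
      refine RingHom.ext fun t => ?_
      show Ideal.Quotient.mk I (algebraMap T S t) = _
      rw [RingHom.comp_apply]
      show _ = algebraMap (T ⧸ m) (S ⧸ I) (Ideal.Quotient.mk m t)
      rw [halg])
    haveI : IsScalarTower R (T ⧸ m) (S ⧸ I) := IsScalarTower.of_algebraMap_eq' (by
      refine RingHom.ext fun r => ?_
      show Ideal.Quotient.mk I (algebraMap R S r) = _
      rw [RingHom.comp_apply]
      show _ = algebraMap (T ⧸ m) (S ⧸ I) (algebraMap R (T ⧸ m) r)
      have : algebraMap R (T ⧸ m) r = Ideal.Quotient.mk m (algebraMap R T r) := rfl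
      rw [this, halg, ← IsScalarTower.algebraMap_apply])
    haveI : Module.Finite T (S ⧸ I) :=
      Module.Finite.of_surjective (IsScalarTower.toAlgHom T S (S ⧸ I)).toLinearMap
        Ideal.Quotient.mk_surjective
    haveI : Module.Finite (T ⧸ m) (S ⧸ I) :=
      Module.Finite.of_restrictScalars_finite T (T ⧸ m) (S ⧸ I)
    haveI : Algebra.FormallyUnramified R (S ⧸ I) :=
      Algebra.FormallyUnramified.of_surjective (IsScalarTower.toAlgHom R S (S ⧸ I))
        Ideal.Quotient.mk_surjective
    haveI : Algebra.FormallyUnramified (T ⧸ m) (S ⧸ I) :=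
      Algebra.FormallyUnramified.of_restrictScalars R (T ⧸ m) (S ⧸ I)
    haveI : CharP T p := (algebraMap T S).charP hinj p
    haveI : CharP (T ⧸ m) p := by
      refine (CharP.charP_iff_prime_eq_zero hp).mpr ?_
      rw [← map_natCast (Ideal.Quotient.mk m), CharP.cast_eq_zero, map_zero]
    haveI : CharP (S ⧸ I) p := by
      refine (CharP.charP_iff_prime_eq_zero hp).mpr ?_
      rw [← map_natCast (Ideal.Quotient.mk I), CharP.cast_eq_zero, map_zero]
    haveI : ExpChar (T ⧸ m) p := ExpChar.prime hp
    -- uniqueness of primes of S ⧸ I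
    have huniq : ∀ P Q : Ideal (S ⧸ I), P.IsPrime → Q.IsPrime → P = Q := by
      have hmem : ∀ (q : Ideal S), q.IsPrime → I ≤ q → ∀ x : S,
          x ∈ q ↔ (hpow x).choose ∈ m := by
        intro q hq hIq x
        have hle : m ≤ q.comap (algebraMap T S) :=
          le_trans Ideal.le_comap_map (Ideal.comap_mono hIq)
        have heq : q.comap (algebraMap T S) = m :=
          (hm.eq_of_le (Ideal.comap_ne_top _ hq.ne_top) hle).symm
        have hc := (hpow x).choose_spec
        rw [← heq, Ideal.mem_comap, hc]
        exact (hq.pow_mem_iff_mem p hp.pos).symm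
      intro P Q hP hQ
      have h1 : P.comap (Ideal.Quotient.mk I) = Q.comap (Ideal.Quotient.mk I) := by
        have hP' : I ≤ P.comap (Ideal.Quotient.mk I) := fun y hy => by
          show Ideal.Quotient.mk I y ∈ P
          rw [Ideal.Quotient.eq_zero_iff_mem.mpr hy]
          exact P.zero_mem
        have hQ' : I ≤ Q.comap (Ideal.Quotient.mk I) := fun y hy => by
          show Ideal.Quotient.mk I y ∈ Q
          rw [Ideal.Quotient.eq_zero_iff_mem.mpr hy]
          exact Q.zero_mem
        ext x
        show x ∈ P.comap (Ideal.Quotient.mk I) ↔ x ∈ Q.comap (Ideal.Quotient.mk I)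
        rw [hmem _ (Ideal.IsPrime.comap _) hP' x, ← hmem _ (Ideal.IsPrime.comap _) hQ' x]
      exact Ideal.comap_injective_of_surjective _ Ideal.Quotient.mk_surjective h1
    have hred : IsReduced (S ⧸ I) :=
      Algebra.FormallyUnramified.isReduced_of_field (T ⧸ m) (S ⧸ I)
    -- S ⧸ I is a field
    obtain ⟨M, hM⟩ := Ideal.exists_maximal (S ⧸ I)
    have hMbot : M = ⊥ := by
      refine le_antisymm (fun x hx => ?_) bot_le
      have hnil : x ∈ nilradical (S ⧸ I) := by
        rw [nilradical_eq_sInf]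
        refine Submodule.mem_sInf.mpr fun J hJ => ?_
        rw [huniq J M hJ hM.isPrime]
        exact hx
      exact hred.1 x hnil
    have hfield : IsField (S ⧸ I) := by
      refine ⟨exists_pair_ne _, mul_comm, fun {a} ha => ?_⟩
      have hbot : (⊥ : Ideal (S ⧸ I)).IsMaximal := hMbot ▸ hM
      have hspan : Ideal.span {a} = ⊤ :=
        hbot.1.2 _ (bot_lt_iff_ne_bot.mpr
          (fun h => ha (by rwa [Ideal.span_singleton_eq_bot] at h)))
      have h1 : (1 : S ⧸ I) ∈ Ideal.span {a} := hspan.symm ▸ Submodule.mem_top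
      obtain ⟨b, hb⟩ := Ideal.mem_span_singleton'.mp h1
      exact ⟨b, by rw [mul_comm]; exact hb⟩
    letI : Field (S ⧸ I) := hfield.toField
    haveI : IsPurelyInseparable (T ⧸ m) (S ⧸ I) := by
      refine (isPurelyInseparable_iff_pow_mem (T ⧸ m) p).mpr fun x => ?_
      obtain ⟨y, rfl⟩ := Ideal.Quotient.mk_surjective (I := I) x
      refine ⟨1, ⟨Ideal.Quotient.mk m (hpow y).choose, ?_⟩⟩
      rw [halg, (hpow y).choose_spec, pow_one, map_pow]
    have hrange : (algebraMap (T ⧸ m) (S ⧸ I)).range = ⊤ :=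
      Algebra.FormallyUnramified.range_eq_top_of_isPurelyInseparable (T ⧸ m) (S ⧸ I)
    intro b
    have : b ∈ (algebraMap (T ⧸ m) (S ⧸ I)).range := hrange ▸ Set.mem_univ b
    exact this
  obtain ⟨k, hk⟩ := hsurj (Ideal.Quotient.mk I x)
  obtain ⟨t, rfl⟩ := Ideal.Quotient.mk_surjective (I := m) k
  rw [halg t] at hk
  exact ⟨t, by rwa [← Ideal.Quotient.eq, eq_comm]⟩

/-- The subalgebra of `p`-th powers of an algebra over a semiperfect ring. -/
def frobeniusRange (p : ℕ) [Fact p.Prime] (R R' : Type u) [CommRing R] [CommRing R']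
    [CharP R p] [CharP R' p] [Algebra R R'] (hR : Function.Surjective (frobenius R p)) :
    Subalgebra R R' :=
  { (frobenius R' p).rangeS with
    algebraMap_mem' := fun r => by
      obtain ⟨t, ht⟩ := hR r
      refine ⟨algebraMap R R' t, ?_⟩
      rw [frobenius_def, ← map_pow, ← frobenius_def, ht] }

lemma mem_frobeniusRange_iff (p : ℕ) [Fact p.Prime] (R R' : Type u) [CommRing R] [CommRing R']
    [CharP R p] [CharP R' p] [Algebra R R'] (hR : Function.Surjective (frobenius R p))
    (x : R') : x ∈ frobeniusRange p R R' hR ↔ ∃ y : R', y ^ p = x := by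
  constructor
  · rintro ⟨y, rfl⟩
    exact ⟨y, (frobenius_def p y).symm⟩
  · rintro ⟨y, rfl⟩
    exact ⟨y, frobenius_def p y⟩

set_option maxHeartbeats 1000000 in
set_option synthInstance.maxHeartbeats 200000 in
/-- an étale extension of a semiperfect `𝔽_p`-algebra is semiperfect. -/
theorem semiperfect_of_etale
    (p : ℕ) [Fact p.Prime] (R R' : Type u) [CommRing R] [CommRing R']
    [CharP R p] [CharP R' p] [Algebra R R'] [Algebra.Etale R R']
    (hR : Function.Surjective (frobenius R p)) :
    Function.Surjective (frobenius R' p) := by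
  classical
  have hp : p.Prime := Fact.out
  -- the subalgebra of `p`-th powers
  let T : Subalgebra R R' := frobeniusRange p R R' hR
  have hmemT : ∀ x : R', x ^ p ∈ T := fun x =>
    (mem_frobeniusRange_iff p R R' hR _).mpr ⟨x, rfl⟩
  -- instances making `R'` a finite `T`-module
  haveI : Algebra.FiniteType ↥T R' :=
    Algebra.FiniteType.of_restrictScalars_finiteType (R := R) (S := ↥T) (A := R')
  haveI : Algebra.IsIntegral ↥T R' := by
    refine ⟨fun x => ⟨Polynomial.X ^ p - Polynomial.C (⟨x ^ p, hmemT x⟩ : T),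
      Polynomial.monic_X_pow_sub_C _ hp.ne_zero, ?_⟩⟩
    simp [Polynomial.eval₂_sub, Polynomial.eval₂_pow, Subalgebra.algebraMap_eq]
  haveI : Module.Finite ↥T R' := Algebra.IsIntegral.finite
  -- the image of `T` as a `T`-submodule of `R'`
  set N : Submodule ↥T R' := LinearMap.range (Algebra.linearMap ↥T R') with hNdef
  suffices hN : N = ⊤ by
    intro x
    have hx : x ∈ N := hN ▸ Submodule.mem_top
    obtain ⟨t, ht⟩ := hx
    obtain ⟨y, hy⟩ := (mem_frobeniusRange_iff p R R' hR _).mp t.2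
    exact ⟨y, by rw [frobenius_def, hy]; exact ht⟩
  -- the key fiberwise statement
  have key : ∀ (m : Ideal ↥T), m.IsMaximal → ∀ x : R',
      x ∈ (m • ⊤ : Submodule ↥T R') ⊔ N := by
    intro m hm x
    have hinj : Function.Injective (algebraMap ↥T R') := Subtype.coe_injective
    have hpow : ∀ x : R', ∃ t : ↥T, algebraMap ↥T R' t = x ^ p :=
      fun x => ⟨⟨x ^ p, hmemT x⟩, rfl⟩
    obtain ⟨t, ht⟩ := fiber_surj p R ↥T R' hinj hpow m hm x
    refine Submodule.mem_sup.mpr ⟨x - algebraMap ↥T R' t, ?_, algebraMap ↥T R' t, ⟨t, rfl⟩, ?_⟩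
    · rw [Ideal.smul_top_eq_map]
      exact ht
    · ring
  -- Nakayama
  by_contra hne
  obtain ⟨x0, hx0⟩ : ∃ x : R', x ∉ N := by
    by_contra h
    push_neg at h
    exact hne (eq_top_iff.mpr fun x _ => h x)
  haveI : Module.Finite ↥T (R' ⧸ N) :=
    Module.Finite.of_surjective N.mkQ (Submodule.mkQ_surjective N)
  have hc0 : N.mkQ x0 ≠ 0 := by
    rw [Submodule.mkQ_apply, Ne, Submodule.Quotient.mk_eq_zero]
    exact hx0
  have hann : (⊤ : Submodule ↥T (R' ⧸ N)).annihilator ≠ ⊤ := by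
    intro h
    have h1 : (1 : ↥T) • N.mkQ x0 = 0 :=
      Submodule.mem_annihilator.mp (h ▸ Submodule.mem_top) _ Submodule.mem_top
    rw [one_smul] at h1
    exact hc0 h1
  obtain ⟨m, hm, hle⟩ := Ideal.exists_le_maximal _ hann
  have hsup : (⊤ : Submodule ↥T (R' ⧸ N)) ≤ m • ⊤ := by
    intro c _
    obtain ⟨x, rfl⟩ := Submodule.mkQ_surjective N c
    have h2 : N.mkQ x ∈ Submodule.map N.mkQ ((m • ⊤ : Submodule ↥T R') ⊔ N) :=
      ⟨x, key m hm x, rfl⟩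
    rw [Submodule.map_sup, Submodule.map_smul'', Submodule.map_top, Submodule.range_mkQ] at h2
    have h3 : Submodule.map N.mkQ N = ⊥ := by
      rw [eq_bot_iff]
      rintro y ⟨z, hz, rfl⟩
      simp only [Submodule.mkQ_apply, Submodule.mem_bot, Submodule.Quotient.mk_eq_zero]
      exact hz
    rwa [h3, sup_bot_eq] at h2
  obtain ⟨r, hr1, hr0⟩ :=
    Submodule.exists_sub_one_mem_and_smul_eq_zero_of_fg_of_le_smul m ⊤ Module.Finite.fg_top hsup
  have hrm : r ∈ m := hle (Submodule.mem_annihilator.mpr hr0)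
  have h1m : (1 : ↥T) ∈ m := by
    have := m.sub_mem hrm hr1
    simpa using this
  exact hm.ne_top (m.eq_top_iff_one.mpr h1m)
end

section
/- Let R be a ring, A an R-algebra, I ⊂ A an ideal with A I-adically complete (A ≅ lim A/I^n), and X a smooth affine R-scheme. Then the canonical map X(A) → lim_n X(A/I^n) is a bijection. -/
universe u

/-- for a smooth affine `R`-scheme `X = Spec S` and an `I`-adically
complete `R`-algebra `A`, the map `X(A) → lim_n X(A/I^n)` is bijective. -/
theorem smooth_affine_points_bijective_of_adic_complete
    (R : Type u) (S : Type u) (A : Type u) [CommRing R] [CommRing S] [CommRing A]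
    [Algebra R S] [Algebra.Smooth R S] [Algebra R A]
    (I : Ideal A) [IsAdicComplete I A] :
    Function.Bijective
      (fun φ : S →ₐ[R] A =>
        (⟨fun n => (Ideal.Quotient.mkₐ R (I ^ n)).comp φ,
          fun n s => Ideal.Quotient.factor_mk (Ideal.pow_le_pow_right n.le_succ) _⟩ :
          {f : ∀ n : ℕ, S →ₐ[R] A ⧸ I ^ n //
            ∀ (n : ℕ) (s : S),
              Ideal.Quotient.factor (S := I ^ (n + 1)) (T := I ^ n)
                (Ideal.pow_le_pow_right n.le_succ) (f (n + 1) s) = f n s})) := by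
  have key : ∀ x : A, (∀ n : ℕ, Ideal.Quotient.mk (I ^ n) x = 0) → x = 0 := by
    intro x hx
    haveI h1 : IsHausdorff I A := IsAdicComplete.toIsHausdorff
    refine h1.haus x fun n => ?_
    rw [SModEq.zero, smul_eq_mul, Ideal.mul_top]
    exact Ideal.Quotient.eq_zero_iff_mem.1 (hx n)
  constructor
  · -- injectivity
    intro φ ψ h
    simp only [Subtype.mk.injEq] at h
    ext s
    refine eq_of_sub_eq_zero (key (φ s - ψ s) fun n => ?_)
    have := AlgHom.congr_fun (congrFun (congrArg Subtype.val h) n) s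
    simp only [AlgHom.comp_apply, Ideal.Quotient.mkₐ_eq_mk] at this
    rw [map_sub, this, sub_self]
  · -- surjectivity
    rintro ⟨f, hf⟩
    have hfactor : ∀ (m n : ℕ) (h : m ≤ n) (s : S),
        Ideal.Quotient.factor (S := I ^ n) (T := I ^ m) (Ideal.pow_le_pow_right h) (f n s) = f m s := by
      intro m n h s
      induction n, h using Nat.le_induction with
      | base =>
        obtain ⟨x, hx⟩ := Ideal.Quotient.mk_surjective (f m s)
        rw [← hx, Ideal.Quotient.factor_mk]
      | succ n h ih =>
        obtain ⟨x, hx⟩ := Ideal.Quotient.mk_surjective (f (n + 1) s)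
        have h1 : Ideal.Quotient.mk (I ^ n) x = f n s := by
          rw [← hf n s, ← hx, Ideal.Quotient.factor_mk]
        rw [← hx, Ideal.Quotient.factor_mk]
        rw [← h1, Ideal.Quotient.factor_mk] at ih
        exact ih
    choose a ha using fun (n : ℕ) (s : S) => Ideal.Quotient.mk_surjective (f n s)
    have hmk_an : ∀ (m n : ℕ) (h : m ≤ n) (s : S),
        Ideal.Quotient.mk (I ^ m) (a n s) = f m s := by
      intro m n h s
      have : Ideal.Quotient.mk (I ^ m) (a n s)
          = Ideal.Quotient.factor (S := I ^ n) (T := I ^ m) (Ideal.pow_le_pow_right h) (f n s) := by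
        rw [← ha n s, Ideal.Quotient.factor_mk]
      rw [this, hfactor m n h s]
    have hcauchy : ∀ (s : S) {m n : ℕ}, m ≤ n →
        a m s ≡ a n s [SMOD (I ^ m • ⊤ : Submodule A A)] := by
      intro s m n h
      rw [SModEq.sub_mem, smul_eq_mul, Ideal.mul_top, ← Ideal.Quotient.eq_zero_iff_mem,
        map_sub, ha, hmk_an m n h s, sub_self]
    choose φ₀ hφ₀ using fun s : S =>
      IsPrecomplete.prec (IsAdicComplete.toIsPrecomplete : IsPrecomplete I A) (f := fun n => a n s)
        (fun {m n} h => hcauchy s h)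
    have hmk : ∀ (n : ℕ) (s : S), Ideal.Quotient.mk (I ^ n) (φ₀ s) = f n s := by
      intro n s
      have h2 := hφ₀ s n
      rw [SModEq.sub_mem, smul_eq_mul, Ideal.mul_top, ← Ideal.Quotient.eq_zero_iff_mem,
        map_sub, ha, sub_eq_zero] at h2
      exact h2.symm
    refine ⟨{ toFun := φ₀
              map_one' := eq_of_sub_eq_zero (key _ fun n => by
                rw [map_sub, hmk n 1, map_one, map_one, sub_self])
              map_mul' := fun x y => eq_of_sub_eq_zero (key _ fun n => by
                rw [map_sub, map_mul, hmk, hmk, hmk, map_mul, sub_self])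
              map_zero' := eq_of_sub_eq_zero (key _ fun n => by
                rw [map_sub, hmk n 0, map_zero, map_zero, sub_self])
              map_add' := fun x y => eq_of_sub_eq_zero (key _ fun n => by
                rw [map_sub, map_add, hmk, hmk, hmk, map_add, sub_self])
              commutes' := fun r => eq_of_sub_eq_zero (key _ fun n => by
                rw [map_sub, hmk, AlgHom.commutes, Ideal.Quotient.mk_algebraMap,
                  sub_self]) }, ?_⟩
    apply Subtype.ext
    funext n
    ext s
    exact hmk n s
end

section
/- Let κ : (A, I, σ, σ̇) → (B, J, τ, τ̇) be a morphism of frames, i.e. a ring homomorphism κ : A → B with κ(I) ⊆ J, τ∘κ = κ∘σ, and τ̇∘κ|_I = v·(κ∘σ̇) for some unit v ∈ B^×. Then the unit v is uniquely determined by κ, and if θ and η denote the frame constants of the two frames, then κ(θ) = v·η. -/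
/-- for a morphism of frames `κ : (A,I,σ,σ̇) → (B,J,τ,τ̇)` with
`τ̇ ∘ κ = v · (κ ∘ σ̇)` for a unit `v`, the unit `v` is unique, and
`κ(θ) = v·η` for the frame constants `θ`, `η`. -/
theorem frame_morphism_unit_unique_and_constant
    (p : ℕ) (hp : p.Prime) (A B : Type*) [CommRing A] [CommRing B]
    (I : Ideal A) (J : Ideal B)
    (hradA : I + Ideal.span {(p : A)} ≤ (⊥ : Ideal A).jacobson)
    (hradB : J + Ideal.span {(p : B)} ≤ (⊥ : Ideal B).jacobson)
    (σ : A →+* A) (hσ : ∀ x : A, σ x - x ^ p ∈ Ideal.span {(p : A)})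
    (τ : B →+* B) (hτ : ∀ x : B, τ x - x ^ p ∈ Ideal.span {(p : B)})
    (σdot : I → A)
    (haddσ : ∀ x y : I, σdot (x + y) = σdot x + σdot y)
    (hsemiσ : ∀ (a : A) (x : I), σdot (a • x) = σ a * σdot x)
    (hsurjσ : Ideal.span (Set.range σdot) = ⊤)
    (τdot : J → B)
    (haddτ : ∀ x y : J, τdot (x + y) = τdot x + τdot y)
    (hsemiτ : ∀ (b : B) (x : J), τdot (b • x) = τ b * τdot x)
    (hsurjτ : Ideal.span (Set.range τdot) = ⊤)
    -- frame constants
    (θ : A) (hθ : ∀ x : I, σ x = θ * σdot x)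
    (η : B) (hη : ∀ x : J, τ x = η * τdot x)
    -- the morphism of frames
    (κ : A →+* B) (hκI : ∀ x : I, κ x ∈ J)
    (hκσ : ∀ a : A, τ (κ a) = κ (σ a))
    (v : Bˣ) (hv : ∀ x : I, τdot ⟨κ x, hκI x⟩ = v * κ (σdot x)) :
    (∀ v' : Bˣ, (∀ x : I, τdot ⟨κ x, hκI x⟩ = v' * κ (σdot x)) → v' = v) ∧
      κ θ = v * η := by

  have key : ∀ b : B, (∀ x : I, b * κ (σdot x) = 0) → b = 0 := by
    intro b hb
    have h1 : (1 : A) ∈ Ideal.span (Set.range σdot) := by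
      rw [hsurjσ]; trivial
    obtain ⟨c, hsupp, hs⟩ := Submodule.mem_span_set.mp h1
    have hone : (1 : B) = ∑ a ∈ c.support, κ (c a) * κ a := by
      calc (1 : B) = κ 1 := (map_one κ).symm
      _ = κ (∑ a ∈ c.support, c a • a) := by rw [← hs, Finsupp.sum]
      _ = ∑ a ∈ c.support, κ (c a) * κ a := by
          rw [map_sum]; apply Finset.sum_congr rfl; intro a _
          rw [smul_eq_mul, map_mul]
    have hb2 : b = ∑ a ∈ c.support, κ (c a) * (b * κ a) := by
      calc b = b * 1 := (mul_one b).symm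
      _ = b * ∑ a ∈ c.support, κ (c a) * κ a := by rw [← hone]
      _ = ∑ a ∈ c.support, κ (c a) * (b * κ a) := by
          rw [Finset.mul_sum]; apply Finset.sum_congr rfl; intro a _; ring
    rw [hb2]
    apply Finset.sum_eq_zero
    intro a ha
    obtain ⟨x, hx⟩ := hsupp ha
    rw [← hx, hb x, mul_zero]
  constructor
  · intro v' hv'
    have hz : ∀ x : I, ((v' : B) - (v : B)) * κ (σdot x) = 0 := by
      intro x
      have h1 := hv x
      have h2 := hv' x
      rw [h1] at h2
      linear_combination -h2
    exact Units.ext (sub_eq_zero.mp (key _ hz))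
  · have hz : ∀ x : I, (κ θ - (v : B) * η) * κ (σdot x) = 0 := by
      intro x
      have h1 : κ θ * κ (σdot x) = κ (σ x) := by rw [← map_mul, ← hθ]
      have h2 : κ (σ x) = η * ((v : B) * κ (σdot x)) := by
        rw [← hκσ, hη ⟨κ x, hκI x⟩, hv]
      linear_combination h1 + h2
    have := key _ hz
    linear_combination this
end

section
/- Let A be a commutative ring, and let w, t ∈ A be such that (w^p, t) is a regular sequence and p = u·t − w^p for some unit u ∈ A^× (equivalently, t ≡ u^{-1}·p modulo w^p, as happens for t = [p]_q in the ring Δ_S). Suppose moreover that in A/(t) the element p is a non-zero divisor. Then p is a non-zero divisor in A/(w^p): if p·x = w^p·y in A, then w^p divides x. -/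
/-- if `(w^p, t)` is a regular sequence in `A`, `p = u·t − w^p` for a
unit `u`, and `p` is a non-zero divisor in `A/(t)`, then `p` is a non-zero divisor
in `A/(w^p)`: whenever `p·x = w^p·y`, the element `w^p` divides `x`. -/
theorem p_regular_mod_w_pow_p
    (p : ℕ) (hp : p.Prime) (A : Type*) [CommRing A] (w t : A)
    -- `(w^p, t)` is a regular sequence
    (hreg1 : ∀ z : A, w ^ p * z = 0 → z = 0)
    (hreg2 : ∀ z : A, t * z ∈ Ideal.span {w ^ p} → z ∈ Ideal.span {w ^ p})
    -- `p = u·t − w^p` for a unit `u`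
    (u : Aˣ) (hu : (p : A) = u * t - w ^ p)
    -- `p` is a non-zero divisor in `A/(t)`
    (hpt : ∀ z : A, (p : A) * z ∈ Ideal.span {t} → z ∈ Ideal.span {t}) :
    ∀ x y : A, (p : A) * x = w ^ p * y → w ^ p ∣ x := by
  intro x y hxy
  have key : t * ((u : A) * x) = w ^ p * (y + x) := by
    rw [hu] at hxy; ring_nf at hxy ⊢; linear_combination hxy
  have h1 : (u : A) * x ∈ Ideal.span {w ^ p} := hreg2 _ (Ideal.mem_span_singleton.mpr ⟨y + x, key⟩)
  obtain ⟨c, hc⟩ := Ideal.mem_span_singleton.mp h1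
  exact ⟨(u⁻¹ : Aˣ) * c, by
    have : x = (u⁻¹ : Aˣ) * ((u : A) * x) := by
      rw [← mul_assoc]; simp
    rw [this, hc]; ring⟩
end

section
/- Let A be a commutative ring, I ⊂ A an ideal, and suppose a, b ∈ A are such that (a, b) is a regular sequence in A. If a sequence (x_i) of elements of the ideal K = {x ∈ A : b divides σ(x)} (for a ring endomorphism σ of A with σ(a) = a^p) converges a-adically to x ∈ A, and A is a-adically separated and complete, and (a^p, b) is a regular sequence, then b divides σ(x); i.e. K is a-adically closed in A. -/
/-- Key cancellation lemma: if `(a,b)` is regular then `b*z ∈ (a^n)` implies `z ∈ (a^n)`. -/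
lemma aux_div_pow {A : Type*} [CommRing A] (a b : A)
    (hreg1 : ∀ z : A, a * z = 0 → z = 0)
    (hreg2 : ∀ z : A, b * z ∈ Ideal.span {a} → z ∈ Ideal.span {a}) :
    ∀ n : ℕ, ∀ z : A, a ^ n ∣ b * z → a ^ n ∣ z := by
  intro n
  induction n with
  | zero => intro z _; simpa using one_dvd z
  | succ n ih =>
    intro z hz
    have h1 : a ∣ z := by
      have : b * z ∈ Ideal.span {a} := by
        rw [Ideal.mem_span_singleton]
        exact dvd_trans (dvd_pow_self a (Nat.succ_ne_zero n)) hz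
      have := hreg2 z this
      rwa [Ideal.mem_span_singleton] at this
    obtain ⟨z', rfl⟩ := h1
    obtain ⟨w, hw⟩ := hz
    have hcancel : b * z' = a ^ n * w := by
      have h0 := hreg1 (b * z' - a ^ n * w) (by linear_combination hw)
      linear_combination h0
    have := ih z' ⟨w, hcancel⟩
    rw [pow_succ']
    exact mul_dvd_mul_left a this

/-- the ideal `K = {x : b ∣ σ(x)}` is `a`-adically closed: if `A` is
`a`-adically separated and complete, `(a, b)` and `(a^p, b)` are regular sequences,
`σ(a) = a^p`, and a sequence `(xᵢ)` with `b ∣ σ(xᵢ)` converges `a`-adically to `x`,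
then `b ∣ σ(x)`. -/
theorem divisibility_closed_under_adic_limits
    (p : ℕ) (hp : p.Prime) (A : Type*) [CommRing A] (a b : A)
    (σ : A →+* A) (hσa : σ a = a ^ p)
    -- `(a, b)` is a regular sequence
    (hreg1 : ∀ z : A, a * z = 0 → z = 0)
    (hreg2 : ∀ z : A, b * z ∈ Ideal.span {a} → z ∈ Ideal.span {a})
    -- `(a^p, b)` is a regular sequence
    (hreg1' : ∀ z : A, a ^ p * z = 0 → z = 0)
    (hreg2' : ∀ z : A, b * z ∈ Ideal.span {a ^ p} → z ∈ Ideal.span {a ^ p})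
    -- `A` is `a`-adically separated and complete
    [IsAdicComplete (Ideal.span {a}) A]
    -- a sequence in `K = {x : b ∣ σ x}` converging `a`-adically to `x`
    (x : A) (xs : ℕ → A) (hK : ∀ i, b ∣ σ (xs i))
    (hconv : ∀ n : ℕ, ∃ N : ℕ, ∀ i ≥ N, x - xs i ∈ Ideal.span {a} ^ n) :
    b ∣ σ x := by
  -- For each n, pick an index i(n) and yₙ with σ(xs i(n)) = b * yₙ and σ x - b yₙ ∈ (aⁿ)
  have key : ∀ n : ℕ, ∃ y : A, a ^ n ∣ σ x - b * y := by
    intro n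
    obtain ⟨N, hN⟩ := hconv n
    obtain ⟨y, hy⟩ := hK N
    refine ⟨y, ?_⟩
    have h1 : a ^ n ∣ x - xs N := by
      have := hN N le_rfl
      rwa [Ideal.span_singleton_pow, Ideal.mem_span_singleton] at this
    obtain ⟨t, ht⟩ := h1
    have h2 : σ x - b * y = σ (a ^ n) * σ t := by
      rw [← hy, ← map_mul, ← map_sub, ht]
    rw [h2, map_pow, hσa, ← pow_mul]
    exact dvd_mul_of_dvd_left (pow_dvd_pow a (Nat.le_mul_of_pos_left n hp.pos)) _
  choose ys hys using key
  -- (ys) is Cauchy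
  have hcauchy : ∀ {m n : ℕ}, m ≤ n →
      ys m ≡ ys n [SMOD (Ideal.span {a} ^ m • ⊤ : Ideal A)] := by
    intro m n hmn
    rw [Ideal.smul_top_eq_map]
    rw [SModEq.sub_mem]
    suffices h : ys m - ys n ∈ Ideal.span {a} ^ m by
      simpa using h
    rw [Ideal.span_singleton_pow, Ideal.mem_span_singleton]
    apply aux_div_pow a b hreg1 hreg2
    have : b * (ys m - ys n) = (σ x - b * ys n) - (σ x - b * ys m) := by ring
    rw [this]
    exact dvd_sub (dvd_trans (pow_dvd_pow a hmn) (hys n)) (hys m)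
  obtain ⟨y, hy⟩ := IsPrecomplete.prec (IsAdicComplete.toIsPrecomplete) @hcauchy
  refine ⟨y, ?_⟩
  have : σ x - b * y = 0 := by
    apply (IsAdicComplete.toIsHausdorff : IsHausdorff (Ideal.span {a}) A).haus
    intro n
    rw [SModEq.zero, Ideal.smul_top_eq_map]
    suffices h : σ x - b * y ∈ Ideal.span {a} ^ n by simpa using h
    rw [Ideal.span_singleton_pow, Ideal.mem_span_singleton]
    have h1 := hys n
    have h2 : ys n - y ∈ Ideal.span {a} ^ n := by
      have := hy n
      rw [Ideal.smul_top_eq_map, SModEq.sub_mem] at this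
      simpa using this
    rw [Ideal.span_singleton_pow, Ideal.mem_span_singleton] at h2
    have : σ x - b * y = (σ x - b * ys n) + b * (ys n - y) := by ring
    rw [this]
    exact dvd_add h1 (Dvd.dvd.mul_left h2 b)
  linear_combination this
end

section
/- Let A be a commutative ring and a, p ∈ A such that (a, p) is a regular sequence and A is p-adically complete and a-adically complete. Then the ideal aA is p-adically closed in A, and hence A/aA is p-adically complete. -/
lemma smul_top_ideal {A : Type*} [CommRing A] (I : Ideal A) :
    (I • ⊤ : Submodule A A) = I := by
  rw [smul_eq_mul, Ideal.mul_top]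

/-- if `(a, p)` is a regular sequence in `A` and `A` is both
`p`-adically and `a`-adically complete, then the ideal `aA` is `p`-adically
closed, and the quotient `A/aA` is `p`-adically complete. -/
theorem ideal_p_adically_closed_and_quotient_complete
    (A : Type*) [CommRing A] (a p : A)
    -- `(a, p)` is a regular sequence
    (hreg1 : ∀ z : A, a * z = 0 → z = 0)
    (hreg2 : ∀ z : A, p * z ∈ Ideal.span {a} → z ∈ Ideal.span {a})
    [IsAdicComplete (Ideal.span {p}) A] [IsAdicComplete (Ideal.span {a}) A] :
    (∀ x : A, (∀ n : ℕ, ∃ y ∈ Ideal.span {a}, x - y ∈ Ideal.span {p} ^ n) →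
        x ∈ Ideal.span {a}) ∧
      IsAdicComplete
        (Ideal.span {Ideal.Quotient.mk (Ideal.span {a}) p})
        (A ⧸ Ideal.span {a}) := by
  -- p is a nonzerodivisor
  have hp : ∀ z : A, p * z = 0 → z = 0 := by
    intro z hz
    have key : ∀ n : ℕ, ∃ w : A, z = a ^ n * w ∧ p * w = 0 := by
      intro n
      induction n with
      | zero => exact ⟨z, by simp, hz⟩
      | succ n ih =>
        obtain ⟨w, hw1, hw2⟩ := ih
        have hwa : w ∈ Ideal.span {a} := hreg2 w (by rw [hw2]; exact Ideal.zero_mem _)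
        obtain ⟨w', hw'⟩ := Ideal.mem_span_singleton'.mp hwa
        refine ⟨w', ?_, ?_⟩
        · rw [hw1, ← hw', pow_succ]; ring
        · apply hreg1
          have : a * (p * w') = p * w := by rw [← hw']; ring
          rw [this, hw2]
      
    have := IsHausdorff.haus (I := Ideal.span {a}) (M := A) inferInstance z
    apply this
    intro n
    rw [SModEq.zero, smul_top_ideal, Ideal.span_singleton_pow,
      Ideal.mem_span_singleton']
    obtain ⟨w, hw1, _⟩ := key n
    exact ⟨w, by rw [hw1]; ring⟩
  -- key regularity: a * z ∈ (p^n) → z ∈ (p^n)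
  have hdiv : ∀ (n : ℕ) (z : A), a * z ∈ Ideal.span {p ^ n} → z ∈ Ideal.span {p ^ n} := by
    intro n
    induction n with
    | zero =>
      intro z _
      rw [pow_zero, Ideal.span_singleton_one]
      trivial
    | succ n ih =>
      intro z hz
      obtain ⟨w, hw⟩ := Ideal.mem_span_singleton'.mp hz
      have h1 : p * (w * p ^ n) ∈ Ideal.span {a} := by
        rw [show p * (w * p ^ n) = w * p ^ (n+1) by ring, hw]
        exact Ideal.mem_span_singleton'.mpr ⟨z, by ring⟩
      obtain ⟨c, hc⟩ := Ideal.mem_span_singleton'.mp (hreg2 _ h1)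
      have hzc : z = p * c := by
        have h0 : a * (z - p * c) = 0 := by
          have h2 : a * z = p * (c * a) := by
            rw [hc, show p * (w * p ^ n) = w * p ^ (n+1) by ring, hw]
          rw [mul_sub, h2]; ring
        exact sub_eq_zero.mp (hreg1 _ h0)
      have hwac : w * p ^ n = a * c := by
        have h2 : p * (w * p ^ n) = p * (a * c) := by
          rw [show p * (w * p ^ n) = w * p ^ (n+1) by ring, hw, hzc]; ring
        have h0 : p * (w * p ^ n - a * c) = 0 := by rw [mul_sub, h2, sub_self]
        exact sub_eq_zero.mp (hp _ h0)
      obtain ⟨d, hd⟩ := Ideal.mem_span_singleton'.mp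
        (ih c (Ideal.mem_span_singleton'.mpr ⟨w, hwac⟩))
      exact Ideal.mem_span_singleton'.mpr ⟨d, by rw [hzc, ← hd, pow_succ]; ring⟩
  -- Part 1: the ideal (a) is p-adically closed
  have part1 : ∀ x : A, (∀ n : ℕ, ∃ y ∈ Ideal.span {a}, x - y ∈ Ideal.span {p} ^ n) →
      x ∈ Ideal.span {a} := by
    intro x hx
    have H : ∀ n : ℕ, ∃ b : A, x - a * b ∈ Ideal.span {p ^ n} := by
      intro n
      obtain ⟨y, hy, hxy⟩ := hx n
      obtain ⟨b, hb⟩ := Ideal.mem_span_singleton'.mp hy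
      exact ⟨b, by rw [← Ideal.span_singleton_pow]
                   rwa [show a * b = y by rw [← hb]; ring]⟩
    choose b hb using H
    have hcauchy : ∀ {m n : ℕ}, m ≤ n →
        b m ≡ b n [SMOD ((Ideal.span {p}) ^ m • ⊤ : Submodule A A)] := by
      intro m n hmn
      rw [SModEq.sub_mem, smul_top_ideal, Ideal.span_singleton_pow]
      apply hdiv
      have : a * (b m - b n) = (x - a * b n) - (x - a * b m) := by ring
      rw [this]
      exact Ideal.sub_mem _ ((Ideal.span_singleton_pow p m ▸
        (Ideal.pow_le_pow_right hmn)) (Ideal.span_singleton_pow p n ▸ hb n)) (hb m)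
    obtain ⟨L, hL⟩ := IsPrecomplete.prec (I := Ideal.span {p}) (M := A) inferInstance hcauchy
    have hxL : x = a * L := by
      have := IsHausdorff.haus (I := Ideal.span {p}) (M := A) inferInstance (x - a * L)
      rw [sub_eq_zero] at this
      apply this
      intro n
      rw [SModEq.zero, smul_top_ideal, Ideal.span_singleton_pow]
      have h1 := hb n
      have h2 : b n - L ∈ Ideal.span {p ^ n} := by
        have := hL n
        rwa [SModEq.sub_mem, smul_top_ideal, Ideal.span_singleton_pow] at this
      have : x - a * L = (x - a * b n) + a * (b n - L) := by ring
      rw [this]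
      exact Ideal.add_mem _ h1 (Ideal.mul_mem_left _ _ h2)
    exact Ideal.mem_span_singleton'.mpr ⟨L, by rw [hxL]; ring⟩
  refine ⟨part1, ?_⟩
  set I := Ideal.span {a} with hI
  set π := Ideal.Quotient.mk I with hπ
  set J := Ideal.span {π p} with hJ
  have hJn : ∀ (n : ℕ) (q : A ⧸ I), q ∈ J ^ n ↔ ∃ x : A, π x = q ∧
      ∃ d : A, x - d * p ^ n ∈ I := by
    intro n q
    rw [hJ, Ideal.span_singleton_pow]
    constructor
    · intro hq
      obtain ⟨c, hc⟩ := Ideal.mem_span_singleton'.mp hq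
      obtain ⟨d, hd⟩ := Ideal.Quotient.mk_surjective c
      refine ⟨d * p ^ n, ?_, d, by simp⟩
      rw [← hc, ← hd]
      rw [show (π p) ^ n = π (p ^ n) from (map_pow π p n).symm]
      exact (map_mul π d (p ^ n)).symm
    · rintro ⟨x, rfl, d, hd⟩
      apply Ideal.mem_span_singleton'.mpr
      refine ⟨π d, ?_⟩
      rw [show (π p) ^ n = π (p ^ n) from (map_pow π p n).symm, ← map_mul]
      rw [hπ]
      exact (Ideal.Quotient.mk_eq_mk_iff_sub_mem _ _).mpr (by
        have : d * p ^ n - x = -(x - d * p ^ n) := by ring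
        rw [this]; exact neg_mem hd)
  have hausInst : IsHausdorff J (A ⧸ I) := by
    constructor
    intro q hq
    obtain ⟨x, rfl⟩ := Ideal.Quotient.mk_surjective q
    have hx : x ∈ I := by
      apply part1
      intro n
      have := hq n
      rw [SModEq.zero, smul_top_ideal] at this
      obtain ⟨x', hx', d, hd⟩ := (hJn n _).mp this
      have hxx' : x - x' ∈ I := by
        rw [hπ] at hx'
        exact (Ideal.Quotient.mk_eq_mk_iff_sub_mem _ _).mp hx'.symm
      refine ⟨x - d * p ^ n, ?_, ?_⟩
      · rw [show x - d * p ^ n = (x - x') + (x' - d * p ^ n) by ring]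
        exact Ideal.add_mem _ hxx' hd
      · rw [Ideal.span_singleton_pow]
        exact Ideal.mem_span_singleton'.mpr ⟨d, by ring⟩
    exact Ideal.Quotient.eq_zero_iff_mem.mpr hx
  have precInst : IsPrecomplete J (A ⧸ I) := by
    constructor
    intro f hf
    choose g hg using fun n => Ideal.Quotient.mk_surjective (f n)
    -- differences
    have hdiff : ∀ n : ℕ, ∃ u v : A, g (n+1) - g n = u * p ^ n + v * a := by
      intro n
      have h0 := hf (Nat.le_succ n)
      rw [SModEq.sub_mem, smul_top_ideal] at h0
      have h1 : f (n+1) - f n ∈ J ^ n := by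
        rw [show f (n+1) - f n = -(f n - f (n+1)) by ring]
        exact neg_mem h0
      obtain ⟨x, hx, d, hd⟩ := (hJn n _).mp h1
      have hxg : (g (n+1) - g n) - x ∈ I := by
        have hπeq : π (g (n+1) - g n) = π x := by rw [map_sub, hg, hg, hx]
        exact (Ideal.Quotient.mk_eq_mk_iff_sub_mem _ _).mp hπeq
      obtain ⟨e, he⟩ := Ideal.mem_span_singleton'.mp
        (show (g (n+1) - g n) - d * p ^ n ∈ I from by
          rw [show (g (n+1) - g n) - d * p ^ n = ((g (n+1) - g n) - x) + (x - d * p ^ n) by ring]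
          exact Ideal.add_mem _ hxg hd)
      exact ⟨d, e, by linear_combination -he⟩
    choose u v huv using hdiff
    -- corrected sequence
    let w : ℕ → A := fun n => Nat.rec 0 (fun k wk => wk + v k) n
    let y : ℕ → A := fun n => g n - w n * a
    have hy : ∀ n, y (n+1) - y n = u n * p ^ n := by
      intro n
      show (g (n+1) - w (n+1) * a) - (g n - w n * a) = u n * p ^ n
      have hw : w (n+1) = w n + v n := rfl
      rw [hw]
      have := huv n
      rw [show g (n+1) - (w n + v n) * a - (g n - w n * a)
        = (g (n+1) - g n) - v n * a by ring, this]
      ring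
    have hycauchy : ∀ {m n : ℕ}, m ≤ n →
        y m ≡ y n [SMOD ((Ideal.span {p}) ^ m • ⊤ : Submodule A A)] := by
      intro m n hmn
      rw [SModEq.sub_mem, smul_top_ideal]
      induction n, hmn using Nat.le_induction with
      | base => simp
      | succ n hmn ih =>
        have : y m - y (n+1) = (y m - y n) - (y (n+1) - y n) := by ring
        rw [this]
        refine Ideal.sub_mem _ ih ?_
        rw [hy n]
        apply Ideal.pow_le_pow_right hmn
        rw [Ideal.span_singleton_pow]
        exact Ideal.mem_span_singleton'.mpr ⟨u n, by ring⟩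
    obtain ⟨L, hL⟩ := IsPrecomplete.prec (I := Ideal.span {p}) (M := A) inferInstance hycauchy
    refine ⟨π L, fun n => ?_⟩
    rw [SModEq.sub_mem, smul_top_ideal]
    have h1 : y n - L ∈ Ideal.span {p ^ n} := by
      have := hL n
      rwa [SModEq.sub_mem, smul_top_ideal, Ideal.span_singleton_pow] at this
    have h2 : f n - π L = π (y n - L) := by
      rw [map_sub, ← hg n]
      show π (g n) - π L = π (g n - w n * a) - π L
      congr 1
      rw [map_sub]
      have : π (w n * a) = 0 := by
        apply Ideal.Quotient.eq_zero_iff_mem.mpr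
        exact Ideal.mul_mem_left _ _ (Ideal.mem_span_singleton'.mpr ⟨1, by ring⟩)
      rw [this, sub_zero]
    rw [h2]
    apply (hJn n _).mpr
    obtain ⟨d, hd⟩ := Ideal.mem_span_singleton'.mp h1
    exact ⟨y n - L, rfl, d, by rw [← hd]; simp⟩
  exact { toIsHausdorff := hausInst, toIsPrecomplete := precInst }
end
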